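/- Let f : A ⥤ B, g : A ⥤ C and h : B ⥤ C be functors, let f/B = Comma f (𝟭 B) with projections p : f/B ⥤ A, q : f/B ⥤ B, and let i_f : A ⥤ f/B be the functor a ↦ (a, f.obj a, identity). Then a natural transformation α : p ⋙ g ⟶ q ⋙ h exhibits h as a left Kan extension of p ⋙ g along q if and only if its whiskering with i_f, a natural transformation g ⟶ f ⋙ h, exhibits h as a left Kan extension of g along f. -/

import Mathlib

open CategoryTheory

universe w v v₁ v₂ v₃ v₄ v₅ u u₁ u₂ u₃ u₄ u₅

section Helper

variable {C : Type*} {D : Type*} {H : Type*}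
variable [Category C] [Category D] [Category H]

lemma isLeftKanExtension_of_bijective (L : C ⥤ D) (F : C ⥤ H) (F' : D ⥤ H)
    (α : F ⟶ L ⋙ F')
    (hb : ∀ (G : D ⥤ H), Function.Bijective
      (fun δ : F' ⟶ G => α ≫ Functor.whiskerLeft L δ)) :
    F'.IsLeftKanExtension α where
  nonempty_isUniversal := ⟨by
    have key : ∀ G : Functor.LeftExtension L F, ∃ δ : F' ⟶ G.right,
        α ≫ Functor.whiskerLeft L δ = G.hom := fun G => (hb G.right).2 G.hom
    apply Limits.IsInitial.ofUniqueHom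
      (fun G => StructuredArrow.homMk (key G).choose (key G).choose_spec)
    intro G m
    ext : 1
    apply (hb G.right).1
    show α ≫ Functor.whiskerLeft L m.right = α ≫ Functor.whiskerLeft L _
    show α ≫ Functor.whiskerLeft L m.right = α ≫ Functor.whiskerLeft L (key G).choose
    rw [(key G).choose_spec]
    exact StructuredArrow.w m⟩

end Helper

section Statement8

variable {A : Type u₁} {B : Type u₂} {C : Type u₃}
variable [Category.{v₁} A] [Category.{v₂} B] [Category.{v₃} C]

/-- The canonical functor `i_f : A ⥤ f/B`, `a ↦ (a, f.obj a, identity)`. -/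
def iF (f : A ⥤ B) : A ⥤ Comma f (𝟭 B) where
  obj a := { left := a, right := f.obj a, hom := 𝟙 (f.obj a) }
  map φ := { left := φ, right := f.map φ, w := by simp }

/-- Whiskering with `i_f` : it sends `α : p ⋙ g ⟶ q ⋙ h` to a natural transformation
`g ⟶ f ⋙ h` (using the strict equalities `i_f ⋙ p = 𝟭 A` and `i_f ⋙ q = f`). -/
def restrIF (f : A ⥤ B) (g : A ⥤ C) (h : B ⥤ C)
    (α : Comma.fst f (𝟭 B) ⋙ g ⟶ Comma.snd f (𝟭 B) ⋙ h) : g ⟶ f ⋙ h where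
  app a := α.app ((iF f).obj a)
  naturality _ _ φ := α.naturality ((iF f).map φ)

/-- Extension of a natural transformation `g ⟶ f ⋙ k` to `p ⋙ g ⟶ q ⋙ k`. -/
def extIF (f : A ⥤ B) (g : A ⥤ C) (k : B ⥤ C) (δ : g ⟶ f ⋙ k) :
    Comma.fst f (𝟭 B) ⋙ g ⟶ Comma.snd f (𝟭 B) ⋙ k where
  app X := δ.app X.left ≫ k.map X.hom
  naturality X Y φ := by
    have h1 := δ.naturality φ.left
    have h2 := φ.w
    dsimp at h1 h2 ⊢
    simp only [Comma.fst_map, Comma.snd_map] at ⊢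
    rw [Category.assoc, ← k.map_comp, ← h2, reassoc_of% h1, k.map_comp]

lemma restr_ext (f : A ⥤ B) (g : A ⥤ C) (k : B ⥤ C) (δ : g ⟶ f ⋙ k) :
    restrIF f g k (extIF f g k δ) = δ := by
  ext a
  simp [restrIF, extIF, iF]

lemma ext_restr (f : A ⥤ B) (g : A ⥤ C) (k : B ⥤ C)
    (β : Comma.fst f (𝟭 B) ⋙ g ⟶ Comma.snd f (𝟭 B) ⋙ k) :
    extIF f g k (restrIF f g k β) = β := by
  ext X
  have := β.naturality (X := (iF f).obj X.left) (Y := X)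
    { left := 𝟙 X.left, right := X.hom, w := by simp [iF] }
  dsimp [extIF, restrIF, iF] at this ⊢
  erw [g.map_id, Category.id_comp] at this
  simpa using this.symm

lemma restrIF_comp (f : A ⥤ B) (g : A ⥤ C) (h k : B ⥤ C)
    (α : Comma.fst f (𝟭 B) ⋙ g ⟶ Comma.snd f (𝟭 B) ⋙ h) (δ : h ⟶ k) :
    restrIF f g k (α ≫ Functor.whiskerLeft (Comma.snd f (𝟭 B)) δ) =
      restrIF f g h α ≫ Functor.whiskerLeft f δ := by
  ext a
  rfl

/-- A natural transformation `α : p ⋙ g ⟶ q ⋙ h` exhibits `h` as a left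
Kan extension of `p ⋙ g` along `q` if and only if its whiskering with `i_f`, a natural
transformation `g ⟶ f ⋙ h`, exhibits `h` as a left Kan extension of `g` along `f`. -/
theorem stmt8 (f : A ⥤ B) (g : A ⥤ C) (h : B ⥤ C)
    (α : Comma.fst f (𝟭 B) ⋙ g ⟶ Comma.snd f (𝟭 B) ⋙ h) :
    h.IsLeftKanExtension α ↔ h.IsLeftKanExtension (restrIF f g h α) := by
  have e : ∀ (k : B ⥤ C), Function.Bijective
      (fun β : Comma.fst f (𝟭 B) ⋙ g ⟶ Comma.snd f (𝟭 B) ⋙ k => restrIF f g k β) :=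
    fun k => Function.bijective_iff_has_inverse.2
      ⟨extIF f g k, fun β => ext_restr f g k β, fun δ => restr_ext f g k δ⟩
  constructor
  · intro hα
    apply isLeftKanExtension_of_bijective
    intro k
    have h1 := (h.homEquivOfIsLeftKanExtension α k).bijective
    have : (fun δ : h ⟶ k => restrIF f g h α ≫ Functor.whiskerLeft f δ) =
        (fun β => restrIF f g k β) ∘
          (fun δ : h ⟶ k => α ≫ Functor.whiskerLeft (Comma.snd f (𝟭 B)) δ) := by
      ext δ : 1
      exact (restrIF_comp f g h k α δ).symm
    rw [this]
    exact (e k).comp h1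
  · intro hα
    apply isLeftKanExtension_of_bijective
    intro k
    have h1 := (h.homEquivOfIsLeftKanExtension (restrIF f g h α) k).bijective
    have : (fun δ : h ⟶ k => α ≫ Functor.whiskerLeft (Comma.snd f (𝟭 B)) δ) =
        (fun δ => extIF f g k δ) ∘
          (fun δ : h ⟶ k => restrIF f g h α ≫ Functor.whiskerLeft f δ) := by
      ext δ : 1
      rw [Function.comp_apply, ← restrIF_comp, ext_restr]
    rw [this]
    exact ((Function.bijective_iff_has_inverse.2
      ⟨restrIF f g k, fun δ => restr_ext f g k δ, fun β => ext_restr f g k β⟩).comp h1)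

end Statement8
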